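/- Let d, n, s be integers with d ≥ 4, n ≥ 6d² − 16d + 13 and 1 ≤ s ≤ d − 1. Then every complex number z with Re(z) ≥ 1 satisfies |f_{n,s}(z)| / |f_{n,0}(z)| < 2^s / (3^s · s!). (Here f_{n,0}(z) ≠ 0 since each factor d·z + j with 1 ≤ j ≤ n−1 has real part at least d + 1 > 0.) -/

import Mathlib

open Finset

private lemma asc_pos (a k : ℕ) (ha : 0 < a) : 0 < a.ascFactorial k :=
  lt_of_lt_of_le (Nat.pow_pos ha) (Nat.pow_succ_le_ascFactorial a k)


lemma asc_prod (a : ℕ) : ∀ k : ℕ, a.ascFactorial k = ∏ i ∈ Finset.range k, (a + i)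
  | 0 => rfl
  | k + 1 => by
    rw [Nat.ascFactorial_succ, prod_range_succ, asc_prod a k, mul_comm]

lemma asc_front (a k : ℕ) : a.ascFactorial (k + 1) = a * (a + 1).ascFactorial k := by
  rw [Nat.ascFactorial_succ, ← Nat.succ_ascFactorial]

lemma asc_add (a m : ℕ) : ∀ k : ℕ,
    a.ascFactorial (m + k) = a.ascFactorial m * (a + m).ascFactorial k
  | 0 => by simp
  | k + 1 => by
    rw [← Nat.add_assoc, Nat.ascFactorial_succ, Nat.ascFactorial_succ, asc_add a m k]
    ring

lemma bern (a : ℕ) : ∀ m : ℕ, a ^ (m + 1) + m * a ^ m ≤ a * (a + 1) ^ m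
  | 0 => by simp
  | m + 1 => by
    have h := bern a m
    have h2 : (a ^ (m + 1) + m * a ^ m) * (a + 1) ≤ (a * (a + 1) ^ m) * (a + 1) :=
      Nat.mul_le_mul_right _ h
    have h3 : a ^ (m + 2) + (m + 1) * a ^ (m + 1) ≤ (a ^ (m + 1) + m * a ^ m) * (a + 1) := by
      have : a ^ m * a ≤ a ^ m * (a+1) := by nlinarith [Nat.zero_le (a^m)]
      ring_nf
      nlinarith [Nat.pow_le_pow_left (Nat.le_succ a) m, Nat.zero_le (a ^ m)]
    calc a ^ (m + 1 + 1) + (m + 1) * a ^ (m + 1) ≤ (a ^ (m + 1) + m * a ^ m) * (a + 1) := h3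
      _ ≤ (a * (a + 1) ^ m) * (a + 1) := h2
      _ = a * (a + 1) ^ (m + 1) := by ring

lemma two_mul_pow (u : ℕ) (hu : 1 ≤ u) : 2 * u ^ u ≤ (u + 1) ^ u := by
  rcases Nat.exists_eq_add_of_le hu with ⟨v, rfl⟩
  have h := bern (1 + v) (1 + v)
  -- (1+v)^(1+v+1) + (1+v)*(1+v)^(1+v) ≤ (1+v)*(2+v)^(1+v)
  have h2 : (1 + v) * (2 * (1 + v) ^ (1 + v)) ≤ (1 + v) * (1 + v + 1) ^ (1 + v) := by
    calc (1+v) * (2 * (1+v)^(1+v)) = (1+v)^(1+v+1) + (1+v)*(1+v)^(1+v) := by ring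
      _ ≤ (1+v) * ((1+v)+1) ^ (1+v) := h
      _ = (1+v) * (1+v+1) ^ (1+v) := by ring_nf
  exact Nat.le_of_mul_le_mul_left h2 (by omega)

-- base numeric inequality: with d = 1+t, n = 1+t+m:  6*n*t*(2t+1) < 4*(2t+m)*(2t+m+1)
lemma base_ineq (t m : ℕ) (ht : 3 ≤ t)
    (hm : 6 * (1 + t) ^ 2 + 13 ≤ (1 + t + m) + 16 * (1 + t)) :
    6 * (1 + t + m) * t * (2 * t + 1) < 4 * ((2 * t + m) * (2 * t + m + 1)) := by
  zify at *
  nlinarith [sq_nonneg ((m:ℤ) - 6*t^2 + 9*t), sq_nonneg ((t:ℤ) - 3), sq_nonneg ((m:ℤ)+1)]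

lemma step_ineq' (S T M D N : ℤ) (hS : 1 ≤ S) (hT : 1 ≤ T) (hM : 0 ≤ M)
    (hD : D = S + T + 1) (hN : N = S + 1 + T + M) (hd : 4 ≤ D)
    (hm : 6 * D ^ 2 + 13 ≤ N + 16 * D) :
    6 * T * (2 * T + 1) * D * (T + M + 1) ≤ 4 * (T + 1) * ((2 * T + M) * (2 * T + M + 1)) := by
  have h2 : (D - 2) * (3 * D + 2) ≤ N := by nlinarith [sq_nonneg (D - 2)]
  have hN0 : 0 ≤ N := by linarith
  have h3 : 3 * D * (D - 2) * N ≤ (N - D + 2) ^ 2 := by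
    nlinarith [mul_le_mul_of_nonneg_right h2 hN0, sq_nonneg (D - 2)]
  have h1 : 3 * T * D * (T + M + 1) ≤ 3 * (D - 2) * D * N := by
    have ha : T ≤ D - 2 := by linarith
    have hb : T + M + 1 ≤ N := by linarith
    nlinarith [mul_le_mul ha hb (by linarith) (by linarith)]
  have h4 : N - D + 2 ≤ 2 * T + M := by linarith
  have h5 : (N - D + 2) ^ 2 ≤ (2 * T + M) * (2 * T + M + 1) := by nlinarith
  have h6 : 6 * T * (2 * T + 1) * D * (T + M + 1) ≤ 4 * (T + 1) * (3 * T * D * (T + M + 1)) := by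
    have h0 : (0 : ℤ) ≤ T * D * (T + M + 1) := by
      apply mul_nonneg (mul_nonneg (by linarith) (by linarith)); linarith
    nlinarith
  have h7 : 3 * (D - 2) * D * N ≤ (2 * T + M) * (2 * T + M + 1) := by
    calc 3 * (D - 2) * D * N = 3 * D * (D - 2) * N := by ring
      _ ≤ (N - D + 2) ^ 2 := h3
      _ ≤ _ := h5
  calc 6 * T * (2 * T + 1) * D * (T + M + 1)
      ≤ 4 * (T + 1) * (3 * T * D * (T + M + 1)) := h6
    _ ≤ 4 * (T + 1) * (3 * (D - 2) * D * N) := by nlinarith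
    _ ≤ 4 * (T + 1) * ((2 * T + M) * (2 * T + M + 1)) := by nlinarith

-- step numeric inequality: d = s+t+1, n = s+1+t+m:
lemma step_ineq (s t m : ℕ) (hs : 1 ≤ s) (ht : 1 ≤ t) (hd : 4 ≤ s + t + 1)
    (hm : 6 * (s + t + 1) ^ 2 + 13 ≤ (s + 1 + t + m) + 16 * (s + t + 1)) :
    6 * t * (2 * t + 1) * (s + t + 1) * (t + m + 1) ≤
      4 * (t + 1) * ((2 * t + m) * (2 * t + m + 1)) := by
  zify at *
  exact step_ineq' s t m _ _ hs ht (Int.natCast_nonneg m) rfl rfl hd hm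

lemma key (s : ℕ) (hs1 : 1 ≤ s) : ∀ t m : ℕ, 1 ≤ t → 4 ≤ s + t →
    6 * (s + t) ^ 2 + 13 ≤ (s + t + m) + 16 * (s + t) →
    3 ^ s * (s + t + m).descFactorial s * t ^ t * (2 * t).ascFactorial (2 * s)
      < 2 ^ s * (s + t) ^ t * (2 * t + m).ascFactorial (2 * s) := by
  induction s, hs1 using Nat.le_induction with
  | base =>
    intro t m ht hd hm
    have ht3 : 3 ≤ t := by omega
    have asc2 : ∀ a : ℕ, a.ascFactorial 2 = a * (a + 1) := by
      intro a
      show (a + 1) * ((a + 0) * 1) = a * (a + 1)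
      ring
    have hdesc : (1 + t + m).descFactorial 1 = 1 + t + m := by
      simp [Nat.descFactorial]
    rw [show 2 * 1 = 2 from rfl, asc2, asc2, hdesc, pow_one, pow_one]
    have h2T : 2 * t ^ t ≤ (t + 1) ^ t := two_mul_pow t ht
    have hb := base_ineq t m ht3 hm
    have hU : 0 < (t + 1) ^ t := Nat.pow_pos (by omega)
    apply Nat.lt_of_mul_lt_mul_left (a := 2)
    calc 2 * (3 * (1 + t + m) * t ^ t * (2 * t * (2 * t + 1)))
        = (6 * (1 + t + m) * t * (2 * t + 1)) * (2 * t ^ t) := by ring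
      _ ≤ (6 * (1 + t + m) * t * (2 * t + 1)) * ((t + 1) ^ t) :=
          Nat.mul_le_mul_left _ h2T
      _ < (4 * ((2 * t + m) * (2 * t + m + 1))) * ((t + 1) ^ t) :=
          mul_lt_mul_of_pos_right hb hU
      _ = 2 * (2 * (1 + t) ^ t * ((2 * t + m) * (2 * t + m + 1))) := by ring
  | succ s hs IH =>
    intro t m ht hd hm
    have e : s + (t + 1) = s + 1 + t := by omega
    have hm' : 6 * (s + (t + 1)) ^ 2 + 13 ≤ (s + (t + 1) + m) + 16 * (s + (t + 1)) := by
      rw [e]; exact hm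
    have IH2 := IH (t + 1) m (by omega) (by omega) hm'
    rw [e] at IH2
    have e2 : 2 * (t + 1) = 2 * t + 2 := by ring
    have e3 : 2 * t + 2 + m = 2 * t + m + 2 := by ring
    rw [e2, e3] at IH2
    -- IH2 : 3^s * (s+1+t+m).descFactorial s * (t+1)^(t+1) * (2t+2).asc (2s)
    --        < 2^s * (s+1+t)^(t+1) * (2t+m+2).asc (2s)
    have hdesc : (s + 1 + t + m).descFactorial (s + 1)
        = (t + m + 1) * (s + 1 + t + m).descFactorial s := by
      rw [Nat.descFactorial_succ, show s + 1 + t + m - s = t + m + 1 from by omega]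
    have hascL : (2 * t).ascFactorial (2 * (s + 1))
        = (2 * t) * ((2 * t + 1) * ((2 * t + 2).ascFactorial (2 * s))) := by
      rw [show 2 * (s + 1) = (2 * s + 1) + 1 from by ring, asc_front, asc_front,
        show 2 * t + 1 + 1 = 2 * t + 2 from by ring]
    have hascR : (2 * t + m).ascFactorial (2 * (s + 1))
        = (2 * t + m) * ((2 * t + m + 1) * ((2 * t + m + 2).ascFactorial (2 * s))) := by
      rw [show 2 * (s + 1) = (2 * s + 1) + 1 from by ring, asc_front, asc_front,
        show 2 * t + m + 1 + 1 = 2 * t + m + 2 from by ring]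
    rw [hdesc, hascL, hascR]
    have hstep := step_ineq s t m hs ht (by omega) (by rw [show s + t + 1 = s + 1 + t from by omega]; exact hm)
    rw [show s + t + 1 = s + 1 + t from by omega] at hstep
    set D := (s + 1 + t + m).descFactorial s with hD
    set P := (2 * t + 2).ascFactorial (2 * s) with hP
    set Q := (2 * t + m + 2).ascFactorial (2 * s) with hQ
    have hV : 2 * (t + 1) * t ^ t ≤ (t + 1) ^ (t + 1) := by
      calc 2 * (t + 1) * t ^ t = (t + 1) * (2 * t ^ t) := by ring
        _ ≤ (t + 1) * (t + 1) ^ t := Nat.mul_le_mul_left _ (two_mul_pow t ht)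
        _ = (t + 1) ^ (t + 1) := by rw [← pow_succ']
    have hcpos : 0 < (t + m + 1) * (2 * t) * (2 * t + 1) * (s + 1 + t) * 3 := by positivity
    apply Nat.lt_of_mul_lt_mul_left (a := 2 * (t + 1) * (s + 1 + t))
    calc 2 * (t + 1) * (s + 1 + t) *
          (3 ^ (s + 1) * ((t + m + 1) * D) * t ^ t * (2 * t * ((2 * t + 1) * P)))
        = ((t + m + 1) * (2 * t) * (2 * t + 1) * (s + 1 + t) * 3)
            * ((2 * (t + 1) * t ^ t) * (3 ^ s * D * P)) := by ring
      _ ≤ ((t + m + 1) * (2 * t) * (2 * t + 1) * (s + 1 + t) * 3)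
            * ((t + 1) ^ (t + 1) * (3 ^ s * D * P)) :=
          Nat.mul_le_mul_left _ (Nat.mul_le_mul_right _ hV)
      _ = ((t + m + 1) * (2 * t) * (2 * t + 1) * (s + 1 + t) * 3)
            * (3 ^ s * D * (t + 1) ^ (t + 1) * P) := by ring
      _ < ((t + m + 1) * (2 * t) * (2 * t + 1) * (s + 1 + t) * 3)
            * (2 ^ s * (s + 1 + t) ^ (t + 1) * Q) :=
          mul_lt_mul_of_pos_left IH2 hcpos
      _ = (6 * t * (2 * t + 1) * (s + 1 + t) * (t + m + 1))
            * ((s + 1 + t) * 2 ^ s * (s + 1 + t) ^ t * Q) := by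
          rw [pow_succ]; ring
      _ ≤ (4 * (t + 1) * ((2 * t + m) * (2 * t + m + 1)))
            * ((s + 1 + t) * 2 ^ s * (s + 1 + t) ^ t * Q) :=
          Nat.mul_le_mul_right _ hstep
      _ = 2 * (t + 1) * (s + 1 + t) *
          (2 ^ (s + 1) * (s + 1 + t) ^ t * ((2 * t + m) * ((2 * t + m + 1) * Q))) := by ring

lemma cabs_aux (w v : ℂ) (g : ℝ) (hg : 0 ≤ g) (h1 : |w.re| ≤ g * |v.re|)
    (h2 : |w.im| ≤ g * |v.im|) : ‖w‖ ≤ g * ‖v‖ := by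
  rw [Complex.norm_def, Complex.norm_def,
    show g * Real.sqrt (Complex.normSq v) = Real.sqrt (g ^ 2 * Complex.normSq v) from by
      rw [Real.sqrt_mul (sq_nonneg g), Real.sqrt_sq hg]]
  apply Real.sqrt_le_sqrt
  rw [Complex.normSq_apply, Complex.normSq_apply]
  have e1 := mul_self_le_mul_self (abs_nonneg w.re) h1
  have e2 := mul_self_le_mul_self (abs_nonneg w.im) h2
  rw [abs_mul_abs_self] at e1 e2
  have e1' : w.re * w.re ≤ g ^ 2 * (v.re * v.re) := by
    calc w.re * w.re ≤ g * |v.re| * (g * |v.re|) := e1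
      _ = g ^ 2 * (|v.re| * |v.re|) := by ring
      _ = g ^ 2 * (v.re * v.re) := by rw [abs_mul_abs_self]
  have e2' : w.im * w.im ≤ g ^ 2 * (v.im * v.im) := by
    calc w.im * w.im ≤ g * |v.im| * (g * |v.im|) := e2
      _ = g ^ 2 * (|v.im| * |v.im|) := by ring
      _ = g ^ 2 * (v.im * v.im) := by rw [abs_mul_abs_self]
  nlinarith [e1', e2']

set_option maxHeartbeats 1000000 in
lemma factor_bound (d s j : ℕ) (z : ℂ) (hz : 1 ≤ z.re) (hs : 1 ≤ s) (hsd : s + 1 ≤ d)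
    (hj : 1 ≤ j) :
    ‖((d : ℂ) - (s : ℂ)) * z + (j : ℂ) - (s : ℂ)‖ ≤
      (if j < s then (1 : ℝ) else if j < d then ((d : ℝ) - s) / d
        else ((d : ℝ) + j - 2 * s) / ((d : ℝ) + j)) * ‖(d : ℂ) * z + (j : ℂ)‖ := by
  have hre1 : (((d : ℂ) - (s : ℂ)) * z + (j : ℂ) - (s : ℂ)).re
      = ((d : ℝ) - s) * z.re + j - s := by simp
  have him1 : (((d : ℂ) - (s : ℂ)) * z + (j : ℂ) - (s : ℂ)).im = ((d : ℝ) - s) * z.im := by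
    simp
  have hre0 : ((d : ℂ) * z + (j : ℂ)).re = (d : ℝ) * z.re + j := by simp
  have him0 : ((d : ℂ) * z + (j : ℂ)).im = (d : ℝ) * z.im := by simp
  have hx : (1 : ℝ) ≤ z.re := hz
  have hd1 : (1 : ℝ) ≤ (d : ℝ) := by exact_mod_cast Nat.one_le_of_lt hsd
  have hs1 : (1 : ℝ) ≤ (s : ℝ) := by exact_mod_cast hs
  have hsd' : (s : ℝ) + 1 ≤ (d : ℝ) := by exact_mod_cast hsd
  have hj1 : (1 : ℝ) ≤ (j : ℝ) := by exact_mod_cast hj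
  have hC : 0 < (d : ℝ) * z.re + j := by nlinarith
  -- the imaginary part inequality reduces to (d - s) ≤ g * d
  split_ifs with h1 h2
  · -- j < s : g = 1
    apply cabs_aux _ _ _ (by norm_num)
    · rw [hre1, hre0, abs_of_pos hC, abs_le]
      constructor
      · nlinarith
      · nlinarith
    · rw [him1, him0, abs_mul, abs_mul]
      have : |(d : ℝ) - s| ≤ |(d : ℝ)| := by
        rw [abs_of_nonneg (by linarith : (0:ℝ) ≤ (d:ℝ) - s), abs_of_nonneg (by linarith)]
        linarith
      calc |(d : ℝ) - s| * |z.im| ≤ |(d : ℝ)| * |z.im| :=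
            mul_le_mul_of_nonneg_right this (abs_nonneg _)
        _ = 1 * (|(d : ℝ)| * |z.im|) := by ring
  · -- s ≤ j < d : g = (d - s)/d
    have hjd : (j : ℝ) ≤ (d : ℝ) := by exact_mod_cast Nat.le_of_lt h2
    have hsj : (s : ℝ) ≤ (j : ℝ) := by exact_mod_cast Nat.le_of_not_lt h1
    have hd0 : (0 : ℝ) < (d : ℝ) := by linarith
    have hg : (0 : ℝ) ≤ ((d : ℝ) - s) / d := div_nonneg (by linarith) (le_of_lt hd0)
    apply cabs_aux _ _ _ hg
    · rw [hre1, hre0, abs_of_pos hC, abs_of_nonneg (by nlinarith), div_mul_eq_mul_div,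
        le_div_iff₀ hd0]
      nlinarith [mul_nonneg (by linarith : (0:ℝ) ≤ (s:ℝ)) (by linarith : (0:ℝ) ≤ (d:ℝ) - j)]
    · rw [him1, him0, abs_mul, abs_mul, ← mul_assoc]
      apply mul_le_mul_of_nonneg_right _ (abs_nonneg _)
      rw [abs_of_nonneg (by linarith : (0:ℝ) ≤ (d:ℝ) - s), abs_of_nonneg (by linarith)]
      rw [div_mul_eq_mul_div, le_div_iff₀ hd0]
  · -- d ≤ j : g = (d + j - 2s)/(d + j)
    have hdj : (d : ℝ) ≤ (j : ℝ) := by exact_mod_cast Nat.le_of_not_lt h2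
    have hden : (0 : ℝ) < (d : ℝ) + j := by linarith
    have hnum : (0 : ℝ) ≤ (d : ℝ) + j - 2 * s := by linarith
    have hg : (0 : ℝ) ≤ ((d : ℝ) + j - 2 * s) / ((d : ℝ) + j) := div_nonneg hnum (le_of_lt hden)
    apply cabs_aux _ _ _ hg
    · rw [hre1, hre0, abs_of_pos hC, abs_of_nonneg (by nlinarith), div_mul_eq_mul_div,
        le_div_iff₀ hden]
      nlinarith [mul_nonneg (mul_nonneg (by linarith : (0:ℝ) ≤ (s:ℝ))
        (by linarith : (0:ℝ) ≤ (j:ℝ) - d)) (by linarith : (0:ℝ) ≤ z.re - 1)]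
    · rw [him1, him0, abs_mul, abs_mul, ← mul_assoc]
      apply mul_le_mul_of_nonneg_right _ (abs_nonneg _)
      rw [abs_of_nonneg (by linarith : (0:ℝ) ≤ (d:ℝ) - s), abs_of_nonneg (by linarith)]
      rw [div_mul_eq_mul_div, le_div_iff₀ hden]
      have key3 : 0 ≤ (s : ℝ) * ((j : ℝ) - d) :=
        mul_nonneg (by linarith) (by linarith)
      linarith [key3, sq_nonneg ((d:ℝ))]

/-- `f_{n,s}(z) = C(n,s) · ∏_{j=1}^{n−1} ((d−s)·z + j − s)`. -/
noncomputable def hyperF (d n s : ℕ) (z : ℂ) : ℂ :=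
  (n.choose s : ℂ) * ∏ j ∈ Finset.Icc 1 (n - 1), (((d : ℂ) - (s : ℂ)) * z + (j : ℂ) - (s : ℂ))

open Finset in
set_option maxHeartbeats 1000000 in
theorem stmt_10 (d n s : ℕ) (hd : 4 ≤ d) (hn : 6 * (d : ℤ) ^ 2 - 16 * d + 13 ≤ (n : ℤ))
    (hs : 1 ≤ s) (hs' : s ≤ d - 1) (z : ℂ) (hz : 1 ≤ z.re) :
    ‖hyperF d n s z‖ / ‖hyperF d n 0 z‖ <
      (2 : ℝ) ^ s / ((3 : ℝ) ^ s * (s.factorial : ℝ)) := by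
  have hsd : s + 1 ≤ d := by omega
  have hn6 : 6 * d ^ 2 + 13 ≤ n + 16 * d := by zify; linarith
  have hdn : d + 1 ≤ n := by
    have : (d : ℤ) + 1 ≤ (n : ℤ) := by nlinarith [hn, (by exact_mod_cast hd : (4:ℤ) ≤ (d:ℤ))]
    exact_mod_cast this
  have h0pos : ∀ j ∈ Finset.Icc 1 (n - 1), 0 < ‖(d : ℂ) * z + (j : ℂ)‖ := by
    intro j hj
    have hj1 : 1 ≤ j := (Finset.mem_Icc.mp hj).1
    have hre : ((d : ℂ) * z + (j : ℂ)).re = (d : ℝ) * z.re + j := by simp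
    have h1 : (0 : ℝ) < (d : ℝ) * z.re + j := by
      have : (1:ℝ) ≤ (d:ℝ) := by exact_mod_cast Nat.one_le_of_lt hsd
      have : (1:ℝ) ≤ (j:ℝ) := by exact_mod_cast hj1
      nlinarith
    calc (0:ℝ) < (d : ℝ) * z.re + j := h1
      _ = ((d : ℂ) * z + (j : ℂ)).re := hre.symm
      _ ≤ ‖(d : ℂ) * z + (j : ℂ)‖ := Complex.re_le_norm _
  have hF0 : ‖hyperF d n 0 z‖
      = ∏ j ∈ Finset.Icc 1 (n - 1), ‖(d : ℂ) * z + (j : ℂ)‖ := by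
    unfold hyperF
    rw [norm_mul, norm_prod]
    simp
  have hFs : ‖hyperF d n s z‖ = (n.choose s : ℝ) *
      ∏ j ∈ Finset.Icc 1 (n - 1), ‖((d : ℂ) - (s : ℂ)) * z + (j : ℂ) - (s : ℂ)‖ := by
    unfold hyperF
    rw [norm_mul, norm_prod, Complex.norm_natCast]
  suffices hmain : (n.choose s : ℝ) * ∏ j ∈ Finset.Icc 1 (n - 1),
      (if j < s then (1 : ℝ) else if j < d then ((d : ℝ) - s) / d
        else ((d : ℝ) + j - 2 * s) / ((d : ℝ) + j)) <
      (2 : ℝ) ^ s / ((3 : ℝ) ^ s * (s.factorial : ℝ)) by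
    rw [div_lt_iff₀ (by rw [hF0]; exact Finset.prod_pos h0pos)]
    calc ‖hyperF d n s z‖
        = (n.choose s : ℝ) * ∏ j ∈ Finset.Icc 1 (n - 1),
            ‖((d : ℂ) - (s : ℂ)) * z + (j : ℂ) - (s : ℂ)‖ := hFs
      _ ≤ (n.choose s : ℝ) * ∏ j ∈ Finset.Icc 1 (n - 1),
            ((if j < s then (1 : ℝ) else if j < d then ((d : ℝ) - s) / d
              else ((d : ℝ) + j - 2 * s) / ((d : ℝ) + j)) *
              ‖(d : ℂ) * z + (j : ℂ)‖) := by
          apply mul_le_mul_of_nonneg_left _ (Nat.cast_nonneg _)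
          apply Finset.prod_le_prod (fun j _ => norm_nonneg _)
          intro j hj
          exact factor_bound d s j z hz hs hsd (Finset.mem_Icc.mp hj).1
      _ = ((n.choose s : ℝ) * ∏ j ∈ Finset.Icc 1 (n - 1),
            (if j < s then (1 : ℝ) else if j < d then ((d : ℝ) - s) / d
              else ((d : ℝ) + j - 2 * s) / ((d : ℝ) + j))) *
            ∏ j ∈ Finset.Icc 1 (n - 1), ‖(d : ℂ) * z + (j : ℂ)‖ := by
          rw [Finset.prod_mul_distrib]; ring
      _ < ((2 : ℝ) ^ s / ((3 : ℝ) ^ s * (s.factorial : ℝ))) *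
            ∏ j ∈ Finset.Icc 1 (n - 1), ‖(d : ℂ) * z + (j : ℂ)‖ :=
          mul_lt_mul_of_pos_right hmain (Finset.prod_pos h0pos)
      _ = ((2 : ℝ) ^ s / ((3 : ℝ) ^ s * (s.factorial : ℝ))) * ‖hyperF d n 0 z‖ := by
          rw [hF0]
  -- evaluate the product of the bounds
  have hIcc : Finset.Icc 1 (n - 1) = Finset.Ico 1 n := by
    rw [← Finset.Ico_add_one_right_eq_Icc]
    congr 1
    omega
  set f : ℕ → ℝ := fun j => if j < s then (1 : ℝ) else if j < d then ((d : ℝ) - s) / d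
     else ((d : ℝ) + j - 2 * s) / ((d : ℝ) + j) with hf
  have hsplit : ∏ j ∈ Finset.Ico 1 n, f j
      = (∏ j ∈ Finset.Ico 1 s, f j) * (∏ j ∈ Finset.Ico s d, f j)
        * (∏ j ∈ Finset.Ico d n, f j) := by
    rw [← Finset.prod_Ico_consecutive f (by omega : 1 ≤ s) (by omega : s ≤ n),
      ← Finset.prod_Ico_consecutive f (by omega : s ≤ d) (by omega : d ≤ n), mul_assoc]
  have hp1 : ∏ j ∈ Finset.Ico 1 s, f j = 1 := by
    apply Finset.prod_eq_one
    intro j hj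
    rw [hf]
    simp only [if_pos (Finset.mem_Ico.mp hj).2]
  have hp2 : ∏ j ∈ Finset.Ico s d, f j = (((d : ℝ) - s) / d) ^ (d - s) := by
    rw [Finset.prod_congr rfl (g := fun _ => ((d : ℝ) - s) / d) ?_, Finset.prod_const,
      Nat.card_Ico]
    intro j hj
    obtain ⟨h1, h2⟩ := Finset.mem_Ico.mp hj
    rw [hf]
    simp only [if_neg (by omega : ¬ j < s), if_pos h2]
  have hp3 : ∏ j ∈ Finset.Ico d n, f j
      = ((2 * (d - s)).ascFactorial (n - d) : ℝ) / ((2 * d).ascFactorial (n - d) : ℝ) := by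
    have step1 : ∏ j ∈ Finset.Ico d n, f j
        = ∏ j ∈ Finset.Ico d n, (((d : ℝ) + j - 2 * s) / ((d : ℝ) + j)) := by
      apply Finset.prod_congr rfl
      intro j hj
      obtain ⟨h1, h2⟩ := Finset.mem_Ico.mp hj
      rw [hf]
      simp only [if_neg (by omega : ¬ j < s), if_neg (by omega : ¬ j < d)]
    rw [step1, Finset.prod_Ico_eq_prod_range]
    rw [show (∏ i ∈ Finset.range (n - d),
          ((d : ℝ) + ((d + i : ℕ) : ℝ) - 2 * s) / ((d : ℝ) + ((d + i : ℕ) : ℝ)))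
        = ∏ i ∈ Finset.range (n - d), (((2 * (d - s) + i : ℕ) : ℝ) / ((2 * d + i : ℕ) : ℝ))
        from Finset.prod_congr rfl fun i _ => by
          push_cast [Nat.cast_sub (by omega : s ≤ d)]; ring_nf]
    rw [Finset.prod_div_distrib, ← Nat.cast_prod, ← Nat.cast_prod, ← asc_prod, ← asc_prod]
  rw [hIcc, hsplit, hp1, hp2, hp3]
  -- the natural-number inequality
  have e1 : s + (d - s) = d := by omega
  have e2 : d + (n - d) = n := by omega
  have hkey := key s hs (d - s) (n - d) (by omega) (by omega)
    (by rw [show s + (d - s) + (n - d) = n from by omega, e1]; exact hn6)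
  rw [show s + (d - s) + (n - d) = n from by omega, e1] at hkey
  have hid : (2 * (d - s)).ascFactorial (n - d) * (2 * (d - s) + (n - d)).ascFactorial (2 * s)
      = (2 * (d - s)).ascFactorial (2 * s) * (2 * d).ascFactorial (n - d) := by
    calc (2 * (d - s)).ascFactorial (n - d) * (2 * (d - s) + (n - d)).ascFactorial (2 * s)
        = (2 * (d - s)).ascFactorial ((n - d) + 2 * s) := (asc_add _ _ _).symm
      _ = (2 * (d - s)).ascFactorial (2 * s + (n - d)) := by rw [Nat.add_comm]
      _ = (2 * (d - s)).ascFactorial (2 * s) * (2 * (d - s) + 2 * s).ascFactorial (n - d) :=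
          asc_add _ _ _
      _ = _ := by rw [show 2 * (d - s) + 2 * s = 2 * d from by omega]
  have hB1pos : 0 < (2 * (d - s)).ascFactorial (2 * s) := asc_pos _ _ (by omega)
  have finalN : 3 ^ s * n.descFactorial s * (d - s) ^ (d - s) * (2 * (d - s)).ascFactorial (n - d)
      < 2 ^ s * d ^ (d - s) * (2 * d).ascFactorial (n - d) := by
    refine lt_of_mul_lt_mul_right ?_ (Nat.zero_le ((2 * (d - s)).ascFactorial (2 * s)))
    calc 3 ^ s * n.descFactorial s * (d - s) ^ (d - s) * (2 * (d - s)).ascFactorial (n - d)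
          * (2 * (d - s)).ascFactorial (2 * s)
        = (3 ^ s * n.descFactorial s * (d - s) ^ (d - s) * (2 * (d - s)).ascFactorial (2 * s))
            * (2 * (d - s)).ascFactorial (n - d) := by ring
      _ < (2 ^ s * d ^ (d - s) * (2 * (d - s) + (n - d)).ascFactorial (2 * s))
            * (2 * (d - s)).ascFactorial (n - d) :=
          mul_lt_mul_of_pos_right hkey (asc_pos _ _ (by omega))
      _ = 2 ^ s * d ^ (d - s) * ((2 * (d - s)).ascFactorial (n - d)
            * (2 * (d - s) + (n - d)).ascFactorial (2 * s)) := by ring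
      _ = 2 ^ s * d ^ (d - s) * ((2 * (d - s)).ascFactorial (2 * s)
            * (2 * d).ascFactorial (n - d)) := by rw [hid]
      _ = 2 ^ s * d ^ (d - s) * (2 * d).ascFactorial (n - d)
            * (2 * (d - s)).ascFactorial (2 * s) := by ring
  -- transfer to the reals
  have hcast : (d : ℝ) - s = ((d - s : ℕ) : ℝ) := by
    rw [Nat.cast_sub (by omega : s ≤ d)]
  have hA2pos : (0 : ℝ) < ((2 * d).ascFactorial (n - d) : ℝ) := by
    exact_mod_cast asc_pos _ _ (by omega)
  have hdpos : (0 : ℝ) < (d : ℝ) ^ (d - s) := by positivity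
  have hform : (n.choose s : ℝ) * (1 * (((d : ℝ) - s) / d) ^ (d - s)
        * (((2 * (d - s)).ascFactorial (n - d) : ℝ) / ((2 * d).ascFactorial (n - d) : ℝ)))
      = ((n.choose s : ℝ) * ((d - s : ℕ) : ℝ) ^ (d - s)
          * ((2 * (d - s)).ascFactorial (n - d) : ℝ))
        / ((d : ℝ) ^ (d - s) * ((2 * d).ascFactorial (n - d) : ℝ)) := by
    rw [hcast, div_pow]
    ring
  rw [hform, div_lt_div_iff₀ (by positivity) (by positivity)]
  rw [Nat.descFactorial_eq_factorial_mul_choose] at finalN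
  have hcastlt := (Nat.cast_lt (α := ℝ)).mpr finalN
  push_cast at hcastlt
  nlinarith [hcastlt]
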